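/- Let y ∈ (0, 1/8], and let G be a graph such that no subset S ⊆ V(G) satisfies both χ(S) ≥ y·χ(G) and G[S] is anticonnected. Then G contains a complete blockade (B_1, …, B_k) with k ≥ y^{-1/2} and χ(B_i) ≥ y·χ(G) for all i ∈ [k]. -/

import Mathlib

open SimpleGraph

/-- The chromatic number of the subgraph of `G` induced on `S`, as a natural number. -/
noncomputable def chiS {V : Type*} [Fintype V] (G : SimpleGraph V) (S : Set V) : ℕ :=
  (G.induce S).chromaticNumber.toNat

section Aux

variable {V : Type*} [Fintype V] (G : SimpleGraph V)

lemma colorable_chiS (S : Set V) : (G.induce S).Colorable (chiS G S) :=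
  colorable_chromaticNumber_of_fintype _

lemma chiS_cast (S : Set V) :
    ((chiS G S : ℕ) : ℕ∞) = (G.induce S).chromaticNumber :=
  ENat.coe_toNat (chromaticNumber_ne_top_iff_exists.mpr ⟨_, colorable_chiS G S⟩)

lemma chiS_le_iff {S : Set V} {n : ℕ} : chiS G S ≤ n ↔ (G.induce S).Colorable n := by
  rw [← Nat.cast_le (α := ℕ∞), chiS_cast, chromaticNumber_le_iff_colorable]

lemma chiS_mono {S T : Set V} (h : S ⊆ T) : chiS G S ≤ chiS G T :=
  (chiS_le_iff G).mpr (Colorable.of_hom (G.induceHomOfLE h).toHom (colorable_chiS G T))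

lemma chiS_empty : chiS G (∅ : Set V) = 0 := by
  haveI : IsEmpty (∅ : Set V) := ⟨fun x => x.2⟩
  unfold chiS
  rw [chromaticNumber_eq_zero_of_isEmpty]
  rfl

lemma chiS_union_le (X Y : Set V) : chiS G (X ∪ Y) ≤ chiS G X + chiS G Y := by
  classical
  rw [chiS_le_iff]
  obtain ⟨C1⟩ := colorable_chiS G X
  obtain ⟨C2⟩ := colorable_chiS G Y
  have C : (G.induce (X ∪ Y)).Coloring (Fin (chiS G X) ⊕ Fin (chiS G Y)) := by
    refine Coloring.mk
      (fun v => if h : v.1 ∈ X then Sum.inl (C1 ⟨v.1, h⟩)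
        else Sum.inr (C2 ⟨v.1, v.2.resolve_left h⟩)) ?_
    intro v w hvw
    have hadj : G.Adj v.1 w.1 := hvw
    beta_reduce
    split_ifs with h1 h2 h2
    · intro he
      exact C1.valid (by exact hadj : (G.induce X).Adj ⟨v.1, h1⟩ ⟨w.1, h2⟩) (Sum.inl.inj he)
    · exact fun he => by simp at he
    · exact fun he => by simp at he
    · intro he
      exact C2.valid
        (by exact hadj : (G.induce Y).Adj ⟨v.1, v.2.resolve_left h1⟩ ⟨w.1, w.2.resolve_left h2⟩)
        (Sum.inr.inj he)
  simpa using C.colorable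

lemma chiS_union_le_real (X Y : Set V) :
    (chiS G (X ∪ Y) : ℝ) ≤ (chiS G X : ℝ) + (chiS G Y : ℝ) := by
  exact_mod_cast Nat.cast_le.mpr (chiS_union_le G X Y)

end Aux

section B
variable {V : Type*}

lemma compl_induce_eq (G : SimpleGraph V) (S : Set V) :
    (G.induce S)ᶜ = Gᶜ.induce S := by
  ext a b
  show a ≠ b ∧ ¬ G.Adj a.1 b.1 ↔ Gᶜ.Adj a.1 b.1
  rw [compl_adj, ← Subtype.coe_ne_coe]

lemma connected_induce_supp (H : SimpleGraph V) (c : H.ConnectedComponent) :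
    (H.induce c.supp).Connected := by
  classical
  obtain ⟨u, hu⟩ := c.exists_rep
  apply H.induce_connected_of_patches u (by rw [ConnectedComponent.mem_supp_iff]; exact hu)
  intro v hv
  rw [ConnectedComponent.mem_supp_iff] at hv
  have hr : H.Reachable u v := ConnectedComponent.exact
    (show H.connectedComponentMk u = H.connectedComponentMk v from by
      rw [show H.connectedComponentMk u = c from hu, hv])
  obtain ⟨p⟩ := hr
  refine ⟨{w | w ∈ p.support}, ?_, p.start_mem_support, p.end_mem_support, ?_⟩
  · intro w hw
    have : H.Reachable u w := ⟨p.takeUntil w hw⟩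
    rw [ConnectedComponent.mem_supp_iff, ← show H.connectedComponentMk u = c from hu]
    exact (ConnectedComponent.eq.mpr this).symm
  · exact p.connected_induce_support.preconnected _ _

/-- union of a list of sets -/
def unionL (L : List (Set V)) : Set V := ⋃₀ {A | A ∈ L}

@[simp] lemma unionL_nil : unionL ([] : List (Set V)) = ∅ := by
  simp [unionL]

@[simp] lemma unionL_cons (A : Set V) (L : List (Set V)) :
    unionL (A :: L) = A ∪ unionL L := by
  ext x
  simp only [unionL, Set.mem_sUnion, Set.mem_setOf_eq, List.mem_cons, Set.mem_union]
  constructor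
  · rintro ⟨B, (rfl | hB), hx⟩
    · exact Or.inl hx
    · exact Or.inr ⟨B, hB, hx⟩
  · rintro (hx | ⟨B, hB, hx⟩)
    · exact ⟨A, Or.inl rfl, hx⟩
    · exact ⟨B, Or.inr hB, hx⟩

lemma mem_unionL {L : List (Set V)} {x : V} : x ∈ unionL L ↔ ∃ A ∈ L, x ∈ A := by
  simp [unionL]

lemma subset_unionL {L : List (Set V)} {A : Set V} (h : A ∈ L) : A ⊆ unionL L :=
  fun x hx => mem_unionL.mpr ⟨A, h, hx⟩

lemma disjoint_unionL {L : List (Set V)} {S : Set V} (h : ∀ A ∈ L, Disjoint S A) :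
    Disjoint S (unionL L) := by
  rw [Set.disjoint_right]
  intro x hx hxS
  obtain ⟨A, hA, hxA⟩ := mem_unionL.mp hx
  exact (h A hA).le_bot ⟨hxS, hxA⟩ |>.elim

/-- completeness between two sets -/
def Comp (G : SimpleGraph V) (X Y : Set V) : Prop := ∀ a ∈ X, ∀ b ∈ Y, G.Adj a b

lemma Comp.symm {G : SimpleGraph V} {X Y : Set V} (h : Comp G X Y) : Comp G Y X :=
  fun b hb a ha => (h a ha b hb).symm

end B

section Sum

variable {V : Type*} [Fintype V] (G : SimpleGraph V)

lemma chiS_unionL_le (M : List (Set V)) :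
    (chiS G (unionL M) : ℝ) ≤ (M.map (fun B => (chiS G B : ℝ))).sum := by
  induction M with
  | nil => simp [chiS_empty]
  | cons A M ih =>
      rw [unionL_cons]
      calc (chiS G (A ∪ unionL M) : ℝ) ≤ (chiS G A : ℝ) + (chiS G (unionL M) : ℝ) :=
            chiS_union_le_real G _ _
        _ ≤ (chiS G A : ℝ) + (M.map (fun B => (chiS G B : ℝ))).sum := by linarith
        _ = ((A :: M).map (fun B => (chiS G B : ℝ))).sum := by simp

lemma greedy (t : ℝ) (ht : 0 < t) :
    ∀ (L : List (Set V)) (acc : Set V),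
      (∀ A ∈ L, (chiS G A : ℝ) < t) →
      ((chiS G acc : ℝ) < 2 * t) →
      (t ≤ (chiS G (acc ∪ unionL L) : ℝ)) →
      List.Pairwise Disjoint L →
      (∀ A ∈ L, Disjoint acc A) →
      List.Pairwise (Comp G) L →
      (∀ A ∈ L, Comp G acc A) →
      ∃ M : List (Set V),
        unionL M = acc ∪ unionL L ∧
        List.Pairwise Disjoint M ∧
        List.Pairwise (Comp G) M ∧
        (∀ B ∈ M, t ≤ (chiS G B : ℝ)) ∧
        ((M.map (fun B => (chiS G B : ℝ))).sum < t * (2 * M.length + 1)) := by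
  intro L
  induction L with
  | nil =>
      intro acc _ hacc ht' _ _ _ _
      rw [unionL_nil, Set.union_empty] at ht'
      refine ⟨[acc], by simp, by simp, by simp, by simpa using ht', ?_⟩
      simp only [List.map_cons, List.map_nil, List.sum_cons, List.sum_nil, add_zero,
        List.length_cons, List.length_nil]
      push_cast
      nlinarith
  | cons A L ih =>
      intro acc hL hacc hinv hdL haccL hcL haccC
      by_cases h1 : t ≤ (chiS G acc : ℝ)
      · by_cases h2 : t ≤ (chiS G (unionL (A :: L)) : ℝ)
        · -- output acc, recurse with acc' = A
          obtain ⟨M, hMu, hMd, hMc, hMb, hMs⟩ := ih A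
            (fun B hB => hL B (List.mem_cons_of_mem _ hB))
            (lt_trans (hL A (List.mem_cons_self)) (by linarith))
            (by rw [← unionL_cons]; exact h2)
            (List.Pairwise.of_cons hdL)
            (fun B hB => (List.pairwise_cons.mp hdL).1 B hB)
            (List.Pairwise.of_cons hcL)
            (fun B hB => (List.pairwise_cons.mp hcL).1 B hB)
          have hMsub : unionL M = A ∪ unionL L := hMu
          have haccU : Disjoint acc (A ∪ unionL L) :=
            Set.disjoint_union_right.mpr
              ⟨haccL A (List.mem_cons_self),
               disjoint_unionL (fun A' hA' => haccL A' (List.mem_cons_of_mem _ hA'))⟩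
          refine ⟨acc :: M, ?_, ?_, ?_, ?_, ?_⟩
          · rw [unionL_cons, hMsub, unionL_cons]
          · rw [List.pairwise_cons]
            refine ⟨fun B hB => ?_, hMd⟩
            exact haccU.mono_right ((subset_unionL hB).trans hMsub.le)
          · rw [List.pairwise_cons]
            refine ⟨fun B hB a ha b hb => ?_, hMc⟩
            have hbU : b ∈ A ∪ unionL L := hMsub ▸ subset_unionL hB hb
            rcases hbU with hbA | hbL
            · exact haccC A (List.mem_cons_self) a ha b hbA
            · obtain ⟨A', hA', hbA'⟩ := mem_unionL.mp hbL
              exact haccC A' (List.mem_cons_of_mem _ hA') a ha b hbA'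
          · intro B hB
            rcases List.mem_cons.mp hB with rfl | hB
            · exact h1
            · exact hMb B hB
          · simp only [List.map_cons, List.sum_cons, List.length_cons]
            push_cast
            nlinarith [hMs, hacc]
        · -- single block
          push_neg at h2
          refine ⟨[acc ∪ unionL (A :: L)], by simp, by simp, by simp, by simpa using hinv, ?_⟩
          have hsub := chiS_union_le_real G acc (unionL (A :: L))
          simp only [List.map_cons, List.map_nil, List.sum_cons, List.sum_nil, add_zero,
            List.length_cons, List.length_nil]
          push_cast
          nlinarith
      · -- absorb A into acc
        push_neg at h1
        have hA : (chiS G A : ℝ) < t := hL A (List.mem_cons_self)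
        obtain ⟨M, hMu, hMd, hMc, hMb, hMs⟩ := ih (acc ∪ A)
          (fun B hB => hL B (List.mem_cons_of_mem _ hB))
          (by
            have := chiS_union_le_real G acc A
            linarith)
          (by
            rw [Set.union_assoc, ← unionL_cons]
            exact hinv)
          (List.Pairwise.of_cons hdL)
          (fun B hB => Set.disjoint_union_left.mpr
            ⟨haccL B (List.mem_cons_of_mem _ hB),
             (List.pairwise_cons.mp hdL).1 B hB⟩)
          (List.Pairwise.of_cons hcL)
          (fun B hB a ha b hb => by
            rcases ha with ha | ha
            · exact haccC B (List.mem_cons_of_mem _ hB) a ha b hb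
            · exact (List.pairwise_cons.mp hcL).1 B hB a ha b hb)
        refine ⟨M, ?_, hMd, hMc, hMb, hMs⟩
        rw [hMu, Set.union_assoc, ← unionL_cons]

end Sum

theorem stmt_3 {V : Type*} [Fintype V] (G : SimpleGraph V)
    (y : ℝ) (hy0 : 0 < y) (hy : y ≤ 1 / 8)
    (hno : ¬ ∃ S : Set V,
      y * (chiS G Set.univ : ℝ) ≤ (chiS G S : ℝ) ∧ ((G.induce S)ᶜ).Connected) :
    ∃ (k : ℕ) (B : Fin k → Set V),
      y ^ (-(1/2 : ℝ)) ≤ (k : ℝ) ∧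
      (∀ i j, i ≠ j → Disjoint (B i) (B j)) ∧
      (∀ i j, i ≠ j → ∀ a ∈ B i, ∀ b ∈ B j, G.Adj a b) ∧
      ∀ i, y * (chiS G Set.univ : ℝ) ≤ (chiS G (B i) : ℝ) := by
  classical
  -- numeric prep with s = √y
  set s : ℝ := Real.sqrt y with hs_def
  have hs : 0 < s := Real.sqrt_pos.mpr hy0
  have hsy : s ^ 2 = y := Real.sq_sqrt hy0.le
  have hs36 : s ≤ 0.36 := by nlinarith [hsy, hs.le, hy]
  have h2s : 2 * s ≤ 1 - s ^ 2 := by nlinarith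
  have hrpow : y ^ (-(1/2 : ℝ)) = s⁻¹ := by
    rw [Real.rpow_neg hy0.le, ← Real.sqrt_eq_rpow]
  by_cases hV : Nonempty V
  · -- main case
    set c : ℕ := chiS G Set.univ with hc_def
    have hc1 : 1 ≤ c := by
      haveI : Nonempty (Set.univ : Set V) := ⟨⟨Classical.arbitrary V, trivial⟩⟩
      have h1 : 0 < (G.induce (Set.univ : Set V)).chromaticNumber :=
        chromaticNumber_pos ((G.induce (Set.univ : Set V)).colorable_of_fintype)
      rw [← chiS_cast] at h1
      exact_mod_cast h1
    have hc0 : (0 : ℝ) < (c : ℝ) := by exact_mod_cast hc1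
    set t : ℝ := y * (c : ℝ) with ht_def
    have ht0 : 0 < t := mul_pos hy0 hc0
    -- the anticomponents
    haveI : Fintype (Gᶜ.ConnectedComponent) := Fintype.ofFinite _
    set L : List (Set V) :=
      (Finset.univ : Finset (Gᶜ.ConnectedComponent)).toList.map ConnectedComponent.supp
      with hL_def
    have hLmem : ∀ A ∈ L, ∃ cc : Gᶜ.ConnectedComponent, A = cc.supp := by
      intro A hA
      rw [hL_def, List.mem_map] at hA
      obtain ⟨cc, _, rfl⟩ := hA
      exact ⟨cc, rfl⟩
    have hLunion : unionL L = Set.univ := by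
      ext x
      simp only [Set.mem_univ, iff_true, mem_unionL]
      refine ⟨(Gᶜ.connectedComponentMk x).supp, ?_, rfl⟩
      rw [hL_def, List.mem_map]
      exact ⟨Gᶜ.connectedComponentMk x, Finset.mem_toList.mpr (Finset.mem_univ _), rfl⟩
    have hLchi : ∀ A ∈ L, (chiS G A : ℝ) < t := by
      intro A hA
      obtain ⟨cc, rfl⟩ := hLmem A hA
      have hconn : ((G.induce cc.supp)ᶜ).Connected := by
        rw [compl_induce_eq]
        exact connected_induce_supp Gᶜ cc
      by_contra hle
      push_neg at hle
      exact hno ⟨cc.supp, hle, hconn⟩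
    have hLdisj : List.Pairwise Disjoint L := by
      rw [hL_def]
      refine List.Pairwise.map _ ?_ (Finset.nodup_toList _)
      intro c1 c2 hne
      exact Gᶜ.pairwise_disjoint_supp_connectedComponent hne
    have hLcomp : List.Pairwise (Comp G) L := by
      rw [hL_def]
      refine List.Pairwise.map _ ?_ (Finset.nodup_toList _)
      intro c1 c2 hne a ha b hb
      rw [ConnectedComponent.mem_supp_iff] at ha hb
      have hab : a ≠ b := by
        rintro rfl
        exact hne (ha ▸ hb ▸ rfl)
      by_contra hAdj
      have : Gᶜ.Adj a b := ⟨hab, hAdj⟩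
      exact hne (ha ▸ hb ▸ (ConnectedComponent.connectedComponentMk_eq_of_adj this) ▸ rfl)
    -- run the greedy grouping
    have hinv : t ≤ (chiS G ((∅ : Set V) ∪ unionL L) : ℝ) := by
      rw [Set.empty_union, hLunion, ← hc_def]
      nlinarith
    obtain ⟨M, hMu, hMd, hMc, hMb, hMs⟩ := greedy G t ht0 L ∅ hLchi
      (by rw [chiS_empty]; push_cast; nlinarith)
      hinv hLdisj (fun A _ => Set.empty_disjoint A) hLcomp
      (fun A _ a ha => absurd ha (Set.notMem_empty a))
    rw [Set.empty_union, hLunion] at hMu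
    -- counting
    have hcount : (c : ℝ) ≤ (M.map (fun B => (chiS G B : ℝ))).sum := by
      have := chiS_unionL_le G M
      rw [hMu] at this
      exact this
    set k : ℕ := M.length with hk_def
    have hklt : (c : ℝ) < t * (2 * k + 1) := lt_of_le_of_lt hcount hMs
    have hk1 : 1 < y * (2 * (k : ℝ) + 1) := by
      rw [ht_def] at hklt
      have := mul_pos hy0 hc0
      nlinarith
    -- k ≥ y^{-1/2}
    have hkge : y ^ (-(1/2 : ℝ)) ≤ (k : ℝ) := by
      rw [hrpow]
      have hstep1 : s⁻¹ ≤ (1 - y) / (2 * y) := by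
        rw [inv_eq_one_div, div_le_div_iff₀ hs (by nlinarith)]
        nlinarith [mul_le_mul_of_nonneg_right h2s hs.le]
      have hstep2 : (1 - y) / (2 * y) ≤ (k : ℝ) := by
        rw [div_le_iff₀ (by nlinarith)]
        nlinarith
      linarith
    -- assemble
    refine ⟨k, fun i => M.get i, hkge, ?_, ?_, ?_⟩
    · intro i j hij
      rcases lt_or_gt_of_ne (fun h => hij (Fin.ext h) : (i : ℕ) ≠ j) with h | h
      · exact (List.pairwise_iff_get.mp hMd) i j h
      · exact ((List.pairwise_iff_get.mp hMd) j i h).symm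
    · intro i j hij a ha b hb
      rcases lt_or_gt_of_ne (fun h => hij (Fin.ext h) : (i : ℕ) ≠ j) with h | h
      · exact (List.pairwise_iff_get.mp hMc) i j h a ha b hb
      · exact ((List.pairwise_iff_get.mp hMc) j i h).symm a ha b hb
    · intro i
      exact hMb _ (List.get_mem M i)
  · -- V empty
    haveI : IsEmpty V := not_nonempty_iff.mp hV
    have hc0 : chiS G Set.univ = 0 := by
      haveI : IsEmpty (Set.univ : Set V) := ⟨fun x => IsEmpty.false x.1⟩
      unfold chiS
      rw [chromaticNumber_eq_zero_of_isEmpty]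
      rfl
    refine ⟨⌈y ^ (-(1/2 : ℝ))⌉₊, fun _ => ∅, ?_, ?_, ?_, ?_⟩
    · exact Nat.le_ceil _
    · intro _ _ _
      exact Set.disjoint_empty _
    · intro _ _ _ a ha
      exact absurd ha (Set.notMem_empty a)
    · intro _
      rw [hc0]
      push_cast
      rw [mul_zero]
      positivity
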